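/- arXiv:1509.08571 — 2 statements merged into one kernel-verified Lean document; each statement's English description precedes it below -/
import Mathlib

section
/- Let p and p̃ be probability distributions on 𝒮 (not necessarily of full support) with support(p) = support(p̃). Then v_sup^s(p, 𝒯_A, 𝒯_B) = v_sup^s(p̃, 𝒯_A, 𝒯_B) and v_sup^w(p, 𝒯_A, 𝒯_B) = v_sup^w(p̃, 𝒯_A, 𝒯_B); i.e., the suprema of strongly and weakly guaranteeable values depend on the prior only through its support. -/
open Finset

/-- A behavioral strategy in the `n`-stage repeated game: at stage `i`, given the history of
past actions of both players (only the first `i` coordinates of the supplied sequences matter,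
as enforced by `causal`) and the player's side information `si`, it assigns a probability to
each action `x`. -/
structure BehavStrategy (A B SI Act : Type*) [Fintype A] [Fintype B] [Fintype Act] (n : ℕ) where
  prob : Fin n → (Fin n → A) → (Fin n → B) → SI → Act → ℝ
  nonneg : ∀ i ha hb si x, 0 ≤ prob i ha hb si x
  sum_one : ∀ i ha hb si, ∑ x, prob i ha hb si x = 1
  causal : ∀ (i : Fin n) (ha ha' : Fin n → A) (hb hb' : Fin n → B) (si : SI),
    (∀ j : Fin n, (j : ℕ) < (i : ℕ) → ha j = ha' j) →
    (∀ j : Fin n, (j : ℕ) < (i : ℕ) → hb j = hb' j) →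
    prob i ha hb si = prob i ha' hb' si

variable {S SA SB A B : Type*} [Fintype S] [Fintype A] [Fintype B]

/-- The probability that the state is `s` and the action sequences are `a, b`, under prior `p`,
side-information maps `TA, TB`, and behavioral strategies `α` (Alice) and `β` (Bob). -/
noncomputable def inducedP (p : S → ℝ) (TA : S → SA) (TB : S → SB) {n : ℕ}
    (α : BehavStrategy A B SA A n) (β : BehavStrategy A B SB B n)
    (s : S) (a : Fin n → A) (b : Fin n → B) : ℝ :=
  p s * ∏ i, (α.prob i a b (TA s) (a i) * β.prob i a b (TB s) (b i))

/-- Alice's time-average payoff `σ_n`. -/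
noncomputable def avgPay (g : S → A → B → ℝ) {n : ℕ} (s : S) (a : Fin n → A) (b : Fin n → B) : ℝ :=
  (n : ℝ)⁻¹ * ∑ i, g s (a i) (b i)

open scoped Classical in
/-- `P(σ_n < v)` under the induced distribution. -/
noncomputable def probBelow (g : S → A → B → ℝ) (p : S → ℝ) (TA : S → SA) (TB : S → SB)
    {n : ℕ} (α : BehavStrategy A B SA A n) (β : BehavStrategy A B SB B n) (v : ℝ) : ℝ :=
  ∑ s : S, ∑ a : Fin n → A, ∑ b : Fin n → B,
    if avgPay g s a b < v then inducedP p TA TB α β s a b else 0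

/-- Alice strongly guarantees `v`. -/
def StronglyGuarantees (g : S → A → B → ℝ) (p : S → ℝ) (TA : S → SA) (TB : S → SB)
    (v : ℝ) : Prop :=
  ∀ ε : ℝ, 0 < ε → ∃ N : ℕ, ∀ n : ℕ, N < n → ∃ α : BehavStrategy A B SA A n,
    ∀ β : BehavStrategy A B SB B n, probBelow g p TA TB α β v < ε

/-- Alice weakly guarantees `v`. -/
def WeaklyGuarantees (g : S → A → B → ℝ) (p : S → ℝ) (TA : S → SA) (TB : S → SB)
    (v : ℝ) : Prop :=
  ∀ ε : ℝ, 0 < ε → ∃ N : ℕ, ∀ n : ℕ, N < n → ∀ β : BehavStrategy A B SB B n,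
    ∃ α : BehavStrategy A B SA A n, probBelow g p TA TB α β v < ε

/-- `v_sup^s`, the supremum of strongly guaranteeable values. -/
noncomputable def vsupS (g : S → A → B → ℝ) (p : S → ℝ) (TA : S → SA) (TB : S → SB) : ℝ :=
  sSup {v : ℝ | StronglyGuarantees g p TA TB v}

/-- `v_sup^w`, the supremum of weakly guaranteeable values. -/
noncomputable def vsupW (g : S → A → B → ℝ) (p : S → ℝ) (TA : S → SA) (TB : S → SB) : ℝ :=
  sSup {v : ℝ | WeaklyGuarantees g p TA TB v}

/-- `u(q)`: the value of the one-stage game with averaged payoff table `∑ s, q s • g s`. -/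
noncomputable def uVal (g : S → A → B → ℝ) (q : S → ℝ) : ℝ :=
  ⨆ x : {x : A → ℝ // (∀ a, 0 ≤ x a) ∧ ∑ a, x a = 1},
    ⨅ b : B, ∑ s : S, ∑ a : A, q s * x.1 a * g s a b

/-- Expected time-average payoff `E[σ_n]`. -/
noncomputable def expPay (g : S → A → B → ℝ) (p : S → ℝ) (TA : S → SA) (TB : S → SB)
    {n : ℕ} (α : BehavStrategy A B SA A n) (β : BehavStrategy A B SB B n) : ℝ :=
  ∑ s : S, ∑ a : Fin n → A, ∑ b : Fin n → B,
    inducedP p TA TB α β s a b * avgPay g s a b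

/-- `V_n(q)`: the maximin expected average payoff of the `n`-stage game with prior `q`,
no side information for Alice and full information for Bob. -/
noncomputable def Vn (g : S → A → B → ℝ) (q : S → ℝ) (n : ℕ) : ℝ :=
  ⨆ α : BehavStrategy A B Unit A n, ⨅ β : BehavStrategy A B S B n,
    expPay g q (fun _ => ()) (id : S → S) α β

lemma exists_dom (p ptilde : S → ℝ) (hp0 : ∀ s, 0 ≤ p s) (hpt0 : ∀ s, 0 ≤ ptilde s)
    (hsupp : {s : S | 0 < p s} = {s : S | 0 < ptilde s}) :
    ∃ c : ℝ, 0 < c ∧ ∀ s, ptilde s ≤ c * p s := by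
  have hsum : (0:ℝ) ≤ ∑ t, ptilde t / p t :=
    Finset.sum_nonneg fun t _ => div_nonneg (hpt0 t) (hp0 t)
  refine ⟨1 + ∑ s, ptilde s / p s, by linarith, fun s => ?_⟩
  rcases (hp0 s).lt_or_eq with h | h
  · have h1 : ptilde s / p s ≤ ∑ t, ptilde t / p t :=
      Finset.single_le_sum (fun t _ => div_nonneg (hpt0 t) (hp0 t)) (Finset.mem_univ s)
    have h2 : ptilde s / p s ≤ 1 + ∑ t, ptilde t / p t := by
      have : (0:ℝ) ≤ ∑ t, ptilde t / p t :=
        Finset.sum_nonneg fun t _ => div_nonneg (hpt0 t) (hp0 t)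
      linarith
    calc ptilde s = (ptilde s / p s) * p s := by field_simp
      _ ≤ (1 + ∑ t, ptilde t / p t) * p s := by
          exact mul_le_mul_of_nonneg_right h2 h.le
  · have hpt : ptilde s = 0 := by
      by_contra hne
      have : 0 < ptilde s := (hpt0 s).lt_of_ne (Ne.symm hne)
      have : s ∈ {s : S | 0 < p s} := hsupp ▸ this
      exact absurd this.out (by rw [← h]; exact lt_irrefl _)
    rw [hpt, ← h]; simp

lemma probBelow_le_c {SA SB : Type*} (g : S → A → B → ℝ) (p ptilde : S → ℝ)
    (TA : S → SA) (TB : S → SB) {n : ℕ}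
    (α : BehavStrategy A B SA A n) (β : BehavStrategy A B SB B n) (v : ℝ)
    (c : ℝ) (hc : ∀ s, ptilde s ≤ c * p s) :
    probBelow g ptilde TA TB α β v ≤ c * probBelow g p TA TB α β v := by
  classical
  unfold probBelow
  rw [Finset.mul_sum]
  refine Finset.sum_le_sum fun s _ => ?_
  rw [Finset.mul_sum]
  refine Finset.sum_le_sum fun a _ => ?_
  rw [Finset.mul_sum]
  refine Finset.sum_le_sum fun b _ => ?_
  by_cases h : avgPay g s a b < v
  · simp only [h, if_pos]
    unfold inducedP
    have hprod : (0:ℝ) ≤ ∏ i, (α.prob i a b (TA s) (a i) * β.prob i a b (TB s) (b i)) :=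
      Finset.prod_nonneg fun i _ => mul_nonneg (α.nonneg _ _ _ _ _) (β.nonneg _ _ _ _ _)
    calc ptilde s * ∏ i, (α.prob i a b (TA s) (a i) * β.prob i a b (TB s) (b i))
        ≤ (c * p s) * ∏ i, (α.prob i a b (TA s) (a i) * β.prob i a b (TB s) (b i)) :=
          mul_le_mul_of_nonneg_right (hc s) hprod
      _ = c * (p s * ∏ i, (α.prob i a b (TA s) (a i) * β.prob i a b (TB s) (b i))) := by ring
  · simp [h]

lemma sg_transfer {SA SB : Type*} (g : S → A → B → ℝ) (p ptilde : S → ℝ)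
    (TA : S → SA) (TB : S → SB) (v : ℝ)
    (c : ℝ) (hc0 : 0 < c) (hc : ∀ s, ptilde s ≤ c * p s)
    (h : StronglyGuarantees g p TA TB v) : StronglyGuarantees g ptilde TA TB v := by
  intro ε hε
  obtain ⟨N, hN⟩ := h (ε / c) (by positivity)
  refine ⟨N, fun n hn => ?_⟩
  obtain ⟨α, hα⟩ := hN n hn
  refine ⟨α, fun β => ?_⟩
  calc probBelow g ptilde TA TB α β v ≤ c * probBelow g p TA TB α β v :=
        probBelow_le_c g p ptilde TA TB α β v c hc
    _ < c * (ε / c) := by exact mul_lt_mul_of_pos_left (hα β) hc0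
    _ = ε := by field_simp

lemma wg_transfer {SA SB : Type*} (g : S → A → B → ℝ) (p ptilde : S → ℝ)
    (TA : S → SA) (TB : S → SB) (v : ℝ)
    (c : ℝ) (hc0 : 0 < c) (hc : ∀ s, ptilde s ≤ c * p s)
    (h : WeaklyGuarantees g p TA TB v) : WeaklyGuarantees g ptilde TA TB v := by
  intro ε hε
  obtain ⟨N, hN⟩ := h (ε / c) (by positivity)
  refine ⟨N, fun n hn β => ?_⟩
  obtain ⟨α, hα⟩ := hN n hn β
  refine ⟨α, ?_⟩
  calc probBelow g ptilde TA TB α β v ≤ c * probBelow g p TA TB α β v :=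
        probBelow_le_c g p ptilde TA TB α β v c hc
    _ < c * (ε / c) := by exact mul_lt_mul_of_pos_left hα hc0
    _ = ε := by field_simp

/-- The suprema of strongly and weakly guaranteeable values depend on the
prior only through its support. -/
theorem stmt1 {S SA SB A B : Type*} [Fintype S] [Fintype SA] [Fintype SB] [Fintype A] [Fintype B]
    [Nonempty S] [Nonempty SA] [Nonempty SB] [Nonempty A] [Nonempty B]
    (g : S → A → B → ℝ) (TA : S → SA) (TB : S → SB)
    (p ptilde : S → ℝ)
    (hp0 : ∀ s, 0 ≤ p s) (hp1 : ∑ s, p s = 1)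
    (hpt0 : ∀ s, 0 ≤ ptilde s) (hpt1 : ∑ s, ptilde s = 1)
    (hsupp : {s : S | 0 < p s} = {s : S | 0 < ptilde s}) :
    vsupS g p TA TB = vsupS g ptilde TA TB ∧ vsupW g p TA TB = vsupW g ptilde TA TB := by
  obtain ⟨c, hc0, hc⟩ := exists_dom p ptilde hp0 hpt0 hsupp
  obtain ⟨c', hc'0, hc'⟩ := exists_dom ptilde p hpt0 hp0 hsupp.symm
  constructor
  · unfold vsupS
    congr 1
    ext v
    exact ⟨sg_transfer g p ptilde TA TB v c hc0 hc,
           sg_transfer g ptilde p TA TB v c' hc'0 hc'⟩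
  · unfold vsupW
    congr 1
    ext v
    exact ⟨wg_transfer g p ptilde TA TB v c hc0 hc,
           wg_transfer g ptilde p TA TB v c' hc'0 hc'⟩
end

section
/- Let 𝒯_A be surjective, and for each s_A ∈ 𝒮_A let q_{s_A} be a probability distribution on 𝒮 whose support is exactly 𝒯_A^{-1}(s_A). Then v_sup^w(p, 𝒯_A, 𝒯_B) = min_{s_A ∈ 𝒮_A} v_sup^w(q_{s_A}, ∅, 𝟙) and v_sup^s(p, 𝒯_A, 𝒯_B) = min_{s_A ∈ 𝒮_A} v_sup^s(q_{s_A}, ∅, 𝟙); i.e., the problem reduces to the case where Alice has no side information and Bob knows the state exactly. -/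
open Finset

variable {S SA SB A B : Type*} [Fintype S] [Fintype A] [Fintype B]

lemma pisum {n : ℕ} {C : Type*} [Fintype C] (F : (Fin (n+1) → C) → ℝ) :
    ∑ a : Fin (n+1) → C, F a = ∑ x : C, ∑ a' : Fin n → C, F (Fin.cons x a') := by
  rw [← Equiv.sum_comp (Fin.consEquiv fun _ => C) F, Fintype.sum_prod_type]
  rfl

lemma sum_sum_prod_eq_one {A B : Type*} [Fintype A] [Fintype B] [Nonempty A] [Nonempty B] :
    ∀ (n : ℕ) (f : Fin n → (Fin n → A) → (Fin n → B) → ℝ),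
    (∀ (i : Fin n) (a a' : Fin n → A) (b b' : Fin n → B),
      (∀ j : Fin n, (j : ℕ) ≤ (i : ℕ) → a j = a' j) →
      (∀ j : Fin n, (j : ℕ) ≤ (i : ℕ) → b j = b' j) → f i a b = f i a' b') →
    (∀ (i : Fin n) (a : Fin n → A) (b : Fin n → B),
      ∑ x : A, ∑ y : B, f i (Function.update a i x) (Function.update b i y) = 1) →
    ∑ a : Fin n → A, ∑ b : Fin n → B, ∏ i, f i a b = 1 := by
  intro n
  induction n with
  | zero =>
    intro f _ _
    simp
  | succ n ih =>
    intro f hc hs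
    set a₀ : Fin (n+1) → A := fun _ => Classical.arbitrary A with ha₀
    set b₀ : Fin (n+1) → B := fun _ => Classical.arbitrary B with hb₀
    have hf0 : ∀ (x : A) (y : B) (a' : Fin n → A) (b' : Fin n → B),
        f 0 (Fin.cons x a') (Fin.cons y b') = f 0 (Function.update a₀ 0 x) (Function.update b₀ 0 y) := by
      intro x y a' b'
      apply hc <;>
      · intro j hj
        have hj0 : j = 0 := Fin.ext (Nat.le_zero.mp hj)
        subst hj0; simp
    have hinner : ∀ (x : A) (y : B),
        ∑ a' : Fin n → A, ∑ b' : Fin n → B,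
          ∏ i : Fin n, f i.succ (Fin.cons x a') (Fin.cons y b') = 1 := by
      intro x y
      refine ih (fun i a' b' => f i.succ (Fin.cons x a') (Fin.cons y b')) ?_ ?_
      · intro i a' a'' b' b'' ha hb
        apply hc
        · intro j hj
          induction j using Fin.cases with
          | zero => simp
          | succ k =>
            simp only [Fin.cons_succ]
            refine ha k ?_
            simp only [Fin.val_succ] at hj
            omega
        · intro j hj
          induction j using Fin.cases with
          | zero => simp
          | succ k =>
            simp only [Fin.cons_succ]
            refine hb k ?_
            simp only [Fin.val_succ] at hj
            omega
      · intro i a' b'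
        calc ∑ x' : A, ∑ y' : B, f i.succ (Fin.cons x (Function.update a' i x')) (Fin.cons y (Function.update b' i y'))
            = ∑ x' : A, ∑ y' : B, f i.succ (Function.update (Fin.cons x a') i.succ x')
                (Function.update (Fin.cons y b') i.succ y') := by
              refine Finset.sum_congr rfl fun x' _ => Finset.sum_congr rfl fun y' _ => ?_
              rw [Fin.cons_update, Fin.cons_update]
          _ = 1 := hs i.succ (Fin.cons x a') (Fin.cons y b')
    rw [pisum]
    calc ∑ x : A, ∑ a' : Fin n → A, ∑ b : Fin (n+1) → B, ∏ i, f i (Fin.cons x a') b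
        = ∑ x : A, ∑ a' : Fin n → A, ∑ y : B, ∑ b' : Fin n → B,
            ∏ i, f i (Fin.cons x a') (Fin.cons y b') := by
          refine sum_congr rfl fun x _ => sum_congr rfl fun a' _ => ?_
          rw [pisum]
      _ = ∑ x : A, ∑ y : B, ∑ a' : Fin n → A, ∑ b' : Fin n → B,
            f 0 (Function.update a₀ 0 x) (Function.update b₀ 0 y) *
              ∏ i : Fin n, f i.succ (Fin.cons x a') (Fin.cons y b') := by
          refine sum_congr rfl fun x _ => ?_
          rw [Finset.sum_comm]
          refine sum_congr rfl fun y _ => sum_congr rfl fun a' _ => sum_congr rfl fun b' _ => ?_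
          rw [Fin.prod_univ_succ, hf0]
      _ = ∑ x : A, ∑ y : B, f 0 (Function.update a₀ 0 x) (Function.update b₀ 0 y) := by
          refine sum_congr rfl fun x _ => sum_congr rfl fun y _ => ?_
          simp only [← Finset.mul_sum]
          rw [hinner x y, mul_one]
      _ = 1 := hs 0 a₀ b₀

section Kuhn
set_option linter.unusedSectionVars false
open Finset
variable {S SB A B : Type*} [Fintype S] [Fintype A] [Fintype B] [Nonempty S] [Nonempty B]

/-- Prefix "mixture mass" of Bob's small-game strategy family, uniform over states. -/
noncomputable def Dfun {n : ℕ} (β' : BehavStrategy A B S B n) (k : ℕ)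
    (a : Fin n → A) (b : Fin n → B) : ℝ :=
  (Fintype.card S : ℝ)⁻¹ * ∑ t : S,
    ∏ j ∈ Finset.univ.filter (fun j : Fin n => (j : ℕ) < k), β'.prob j a b t (b j)

lemma prob_le_one {SI Act : Type*} [Fintype Act] {n : ℕ} (β : BehavStrategy A B SI Act n)
    (i : Fin n) (a : Fin n → A) (b : Fin n → B) (si : SI) (x : Act) :
    β.prob i a b si x ≤ 1 := by
  have h := β.sum_one i a b si
  have := Finset.single_le_sum (f := fun y => β.prob i a b si y)
    (fun y _ => β.nonneg i a b si y) (Finset.mem_univ x)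
  linarith

lemma Dfun_nonneg {n : ℕ} (β' : BehavStrategy A B S B n) (k : ℕ) (a : Fin n → A)
    (b : Fin n → B) : 0 ≤ Dfun β' k a b := by
  apply mul_nonneg (by positivity)
  exact Finset.sum_nonneg fun t _ => Finset.prod_nonneg fun j _ => β'.nonneg _ _ _ _ _

lemma Dfun_zero {n : ℕ} (β' : BehavStrategy A B S B n) (a : Fin n → A) (b : Fin n → B) :
    Dfun β' 0 a b = 1 := by
  unfold Dfun
  have : Finset.univ.filter (fun j : Fin n => (j : ℕ) < 0) = ∅ := by
    ext j; simp
  rw [this]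
  simp only [Finset.prod_empty, Finset.sum_const, Finset.card_univ, nsmul_eq_mul, mul_one]
  rw [inv_mul_cancel₀]
  exact_mod_cast Fintype.card_ne_zero

lemma filter_lt_succ {n k : ℕ} (hk : k < n) :
    Finset.univ.filter (fun j : Fin n => (j : ℕ) < k + 1) =
      insert ⟨k, hk⟩ (Finset.univ.filter (fun j : Fin n => (j : ℕ) < k)) := by
  ext j
  simp only [Finset.mem_filter, Finset.mem_univ, true_and, Finset.mem_insert]
  constructor
  · intro h
    rcases Nat.lt_succ_iff_lt_or_eq.mp h with h | h
    · exact Or.inr h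
    · exact Or.inl (Fin.ext h)
  · rintro (rfl | h)
    · exact Nat.lt_succ_self k
    · exact Nat.lt_succ_of_lt h

lemma filter_lt_of_ge {n k : ℕ} (hk : n ≤ k) :
    Finset.univ.filter (fun j : Fin n => (j : ℕ) < k) = Finset.univ := by
  ext j; simp only [Finset.mem_filter, Finset.mem_univ, true_and, iff_true]
  exact lt_of_lt_of_le j.isLt hk

lemma Dfun_causal {n : ℕ} (β' : BehavStrategy A B S B n) (k : ℕ)
    {a a' : Fin n → A} {b b' : Fin n → B}
    (hA : ∀ j : Fin n, (j : ℕ) + 1 < k → a j = a' j)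
    (hB : ∀ j : Fin n, (j : ℕ) < k → b j = b' j) :
    Dfun β' k a b = Dfun β' k a' b' := by
  unfold Dfun
  congr 1
  refine Finset.sum_congr rfl fun t _ => Finset.prod_congr rfl fun j hj => ?_
  simp only [Finset.mem_filter] at hj
  have hbj : b j = b' j := hB j hj.2
  have hfun : β'.prob j a b t = β'.prob j a' b' t := by
    apply β'.causal
    · intro m hm; exact hA m (by omega)
    · intro m hm; exact hB m (by omega)
  rw [hfun, hbj]

lemma Dfun_succ_sum {n : ℕ} (β' : BehavStrategy A B S B n) {k : ℕ} (hk : k < n)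
    (a : Fin n → A) (b : Fin n → B) :
    ∑ x : B, Dfun β' (k + 1) a (Function.update b ⟨k, hk⟩ x) = Dfun β' k a b := by
  unfold Dfun
  rw [← Finset.mul_sum]
  congr 1
  rw [Finset.sum_comm]
  refine Finset.sum_congr rfl fun t _ => ?_
  have key : ∀ x : B,
      ∏ j ∈ Finset.univ.filter (fun j : Fin n => (j : ℕ) < k + 1),
        β'.prob j a (Function.update b ⟨k, hk⟩ x) t ((Function.update b ⟨k, hk⟩ x) j) =
      (∏ j ∈ Finset.univ.filter (fun j : Fin n => (j : ℕ) < k), β'.prob j a b t (b j)) *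
        β'.prob ⟨k, hk⟩ a b t x := by
    intro x
    rw [filter_lt_succ hk, Finset.prod_insert (by simp)]
    rw [mul_comm]
    congr 1
    · refine Finset.prod_congr rfl fun j hj => ?_
      simp only [Finset.mem_filter] at hj
      have hne : j ≠ ⟨k, hk⟩ := by
        intro h; rw [h] at hj; exact absurd hj.2 (lt_irrefl k)
      rw [Function.update_of_ne hne]
      have hcc : β'.prob j a (Function.update b ⟨k, hk⟩ x) t = β'.prob j a b t := by
        apply β'.causal
        · intro m _; rfl
        · intro m hm
          have hmne : m ≠ ⟨k, hk⟩ := by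
            intro h; rw [h] at hm; simp at hm; omega
          rw [Function.update_of_ne hmne]
      rw [hcc]
    · rw [Function.update_self]
      have hcc : β'.prob ⟨k, hk⟩ a (Function.update b ⟨k, hk⟩ x) t = β'.prob ⟨k, hk⟩ a b t := by
        apply β'.causal
        · intro m _; rfl
        · intro m hm
          have hmne : m ≠ ⟨k, hk⟩ := by
            intro h; rw [h] at hm; simp at hm
          rw [Function.update_of_ne hmne]
      rw [hcc]
  calc ∑ x : B, ∏ j ∈ Finset.univ.filter (fun j : Fin n => (j : ℕ) < k + 1),
        β'.prob j a (Function.update b ⟨k, hk⟩ x) t ((Function.update b ⟨k, hk⟩ x) j)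
      = ∑ x : B, (∏ j ∈ Finset.univ.filter (fun j : Fin n => (j : ℕ) < k),
          β'.prob j a b t (b j)) * β'.prob ⟨k, hk⟩ a b t x := by
        exact Finset.sum_congr rfl fun x _ => key x
    _ = _ := by rw [← Finset.mul_sum, β'.sum_one, mul_one]

lemma Dfun_mono {n : ℕ} (β' : BehavStrategy A B S B n) (k : ℕ) (a : Fin n → A)
    (b : Fin n → B) : Dfun β' (k + 1) a b ≤ Dfun β' k a b := by
  by_cases hk : k < n
  · unfold Dfun
    apply mul_le_mul_of_nonneg_left _ (by positivity)
    refine Finset.sum_le_sum fun t _ => ?_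
    rw [filter_lt_succ hk, Finset.prod_insert (by simp)]
    calc β'.prob ⟨k, hk⟩ a b t (b ⟨k, hk⟩) *
          ∏ j ∈ Finset.univ.filter (fun j : Fin n => (j : ℕ) < k), β'.prob j a b t (b j)
        ≤ 1 * ∏ j ∈ Finset.univ.filter (fun j : Fin n => (j : ℕ) < k), β'.prob j a b t (b j) := by
          apply mul_le_mul_of_nonneg_right (prob_le_one _ _ _ _ _ _)
          exact Finset.prod_nonneg fun j _ => β'.nonneg _ _ _ _ _
      _ = _ := one_mul _
  · push_neg at hk
    have h1 : Finset.univ.filter (fun j : Fin n => (j : ℕ) < k + 1) = Finset.univ :=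
      filter_lt_of_ge (le_trans hk (Nat.le_succ k))
    have h2 : Finset.univ.filter (fun j : Fin n => (j : ℕ) < k) = Finset.univ :=
      filter_lt_of_ge hk
    unfold Dfun
    rw [h1, h2]

/-- Behavioral-strategy representation (Kuhn) of the uniform mixture over states of the
family of Bob strategies `β'`. -/
noncomputable def mixStrat (SB : Type*) {n : ℕ} (β' : BehavStrategy A B S B n) :
    BehavStrategy A B SB B n where
  prob i ha hb _ x :=
    if Dfun β' i ha hb = 0 then (Fintype.card B : ℝ)⁻¹
    else Dfun β' (i + 1) ha (Function.update hb i x) / Dfun β' i ha hb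
  nonneg i ha hb si x := by
    split
    · positivity
    · exact div_nonneg (Dfun_nonneg _ _ _ _) (Dfun_nonneg _ _ _ _)
  sum_one i ha hb si := by
    split
    · rw [Finset.sum_const, Finset.card_univ, nsmul_eq_mul, mul_inv_cancel₀]
      exact_mod_cast Fintype.card_ne_zero
    · rename_i h
      rw [← Finset.sum_div]
      have : (⟨(i : ℕ), i.isLt⟩ : Fin n) = i := Fin.eta i i.isLt
      rw [show ∑ x : B, Dfun β' ((i : ℕ) + 1) ha (Function.update hb i x)
            = Dfun β' (i : ℕ) ha hb by
          have := Dfun_succ_sum β' i.isLt ha hb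
          rw [Fin.eta] at this
          exact this]
      exact div_self h
  causal i ha ha' hb hb' si hA hB := by
    funext x
    have h1 : Dfun β' (i : ℕ) ha hb = Dfun β' (i : ℕ) ha' hb' :=
      Dfun_causal β' _ (fun j hj => hA j (by omega)) (fun j hj => hB j hj)
    have h2 : Dfun β' ((i : ℕ) + 1) ha (Function.update hb i x)
        = Dfun β' ((i : ℕ) + 1) ha' (Function.update hb' i x) := by
      apply Dfun_causal
      · intro j hj; exact hA j (by omega)
      · intro j hj
        by_cases hji : j = i
        · subst hji; simp
        · have : (j : ℕ) < (i : ℕ) := by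
            rcases lt_or_eq_of_le (Nat.lt_succ_iff.mp hj) with h | h
            · exact h
            · exact absurd (Fin.ext h) hji
          rw [Function.update_of_ne hji, Function.update_of_ne hji]
          exact hB j this
    rw [h1, h2]

lemma prod_mix_ge {n : ℕ} (β' : BehavStrategy A B S B n) (sb : SB) (s : S)
    (a : Fin n → A) (b : Fin n → B) :
    (Fintype.card S : ℝ)⁻¹ * ∏ i, β'.prob i a b s (b i) ≤
      ∏ i, (mixStrat SB β').prob i a b sb (b i) := by
  have main : ∀ k : ℕ, k ≤ n → Dfun β' k a b ≤
      ∏ j ∈ Finset.univ.filter (fun j : Fin n => (j : ℕ) < k),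
        (mixStrat SB β').prob j a b sb (b j) := by
    intro k
    induction k with
    | zero =>
      intro _
      rw [Dfun_zero]
      have : Finset.univ.filter (fun j : Fin n => (j : ℕ) < 0) = ∅ := by ext j; simp
      rw [this, Finset.prod_empty]
    | succ k ihk =>
      intro hk1
      have hk : k < n := hk1
      rw [filter_lt_succ hk, Finset.prod_insert (by simp)]
      have hprev := ihk (le_of_lt hk)
      by_cases h0 : Dfun β' k a b = 0
      · have : Dfun β' (k + 1) a b ≤ 0 := by
          rw [← h0]; exact Dfun_mono β' k a b
        refine le_trans this (mul_nonneg ((mixStrat SB β').nonneg _ _ _ _ _) ?_)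
        exact Finset.prod_nonneg fun j _ => (mixStrat SB β').nonneg _ _ _ _ _
      · have hpos : 0 < Dfun β' k a b := lt_of_le_of_ne (Dfun_nonneg _ _ _ _) (Ne.symm h0)
        have hfac : (mixStrat SB β').prob ⟨k, hk⟩ a b sb (b ⟨k, hk⟩)
            = Dfun β' (k + 1) a b / Dfun β' k a b := by
          show (if Dfun β' k a b = 0 then _ else
            Dfun β' (k + 1) a (Function.update b ⟨k, hk⟩ (b ⟨k, hk⟩)) / Dfun β' k a b) = _
          rw [if_neg h0, Function.update_eq_self]
        rw [hfac]
        calc Dfun β' (k + 1) a b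
            = Dfun β' (k + 1) a b / Dfun β' k a b * Dfun β' k a b := by
              field_simp
          _ ≤ Dfun β' (k + 1) a b / Dfun β' k a b *
              ∏ j ∈ Finset.univ.filter (fun j : Fin n => (j : ℕ) < k),
                (mixStrat SB β').prob j a b sb (b j) := by
              apply mul_le_mul_of_nonneg_left hprev
              exact div_nonneg (Dfun_nonneg _ _ _ _) (Dfun_nonneg _ _ _ _)
  have hn := main n le_rfl
  rw [filter_lt_of_ge le_rfl] at hn
  refine le_trans ?_ hn
  unfold Dfun
  rw [filter_lt_of_ge le_rfl]
  apply mul_le_mul_of_nonneg_left _ (by positivity)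
  exact Finset.single_le_sum
    (f := fun t => ∏ i, β'.prob i a b t (b i))
    (fun t _ => Finset.prod_nonneg fun j _ => β'.nonneg _ _ _ _ _) (Finset.mem_univ s)
end Kuhn

section Transfer
set_option linter.unusedSectionVars false
set_option maxHeartbeats 1000000
open Finset
open scoped Classical

variable {S SA SB A B : Type*} [Fintype S] [Fintype A] [Fintype B]

/-- Per-state conditional defect probability. -/
noncomputable def condP (g : S → A → B → ℝ) (v : ℝ) {n : ℕ}
    (fα : Fin n → (Fin n → A) → (Fin n → B) → A → ℝ)
    (fβ : Fin n → (Fin n → A) → (Fin n → B) → B → ℝ) (s : S) : ℝ :=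
  ∑ a : Fin n → A, ∑ b : Fin n → B,
    if avgPay g s a b < v then ∏ i, fα i a b (a i) * fβ i a b (b i) else 0

lemma condP_nonneg (g : S → A → B → ℝ) (v : ℝ) {n : ℕ}
    (fα : Fin n → (Fin n → A) → (Fin n → B) → A → ℝ)
    (fβ : Fin n → (Fin n → A) → (Fin n → B) → B → ℝ) (s : S)
    (hα : ∀ i a b x, 0 ≤ fα i a b x) (hβ : ∀ i a b x, 0 ≤ fβ i a b x) :
    0 ≤ condP g v fα fβ s := by
  refine Finset.sum_nonneg fun a _ => Finset.sum_nonneg fun b _ => ?_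
  split
  · exact Finset.prod_nonneg fun i _ => mul_nonneg (hα _ _ _ _) (hβ _ _ _ _)
  · exact le_refl 0
  
lemma probBelow_eq_sum (g : S → A → B → ℝ) (p : S → ℝ) (TA : S → SA) (TB : S → SB)
    {n : ℕ} (α : BehavStrategy A B SA A n) (β : BehavStrategy A B SB B n) (v : ℝ) :
    probBelow g p TA TB α β v = ∑ s, p s *
      condP g v (fun i a b x => α.prob i a b (TA s) x)
        (fun i a b x => β.prob i a b (TB s) x) s := by
  unfold probBelow condP inducedP
  refine Finset.sum_congr rfl fun s _ => ?_
  rw [Finset.mul_sum]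
  refine Finset.sum_congr rfl fun a _ => ?_
  rw [Finset.mul_sum]
  refine Finset.sum_congr rfl fun b _ => ?_
  rw [mul_ite, mul_zero]

/-- Alice's restriction to a fixed side information. -/
def restrictA {n : ℕ} (α : BehavStrategy A B SA A n) (sA : SA) :
    BehavStrategy A B Unit A n where
  prob i ha hb _ x := α.prob i ha hb sA x
  nonneg i ha hb _ x := α.nonneg i ha hb sA x
  sum_one i ha hb _ := α.sum_one i ha hb sA
  causal i ha ha' hb hb' _ h1 h2 := α.causal i ha ha' hb hb' sA h1 h2

/-- Combining a family of no-side-information strategies into one with side information. -/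
def combineA {n : ℕ} (αf : SA → BehavStrategy A B Unit A n) :
    BehavStrategy A B SA A n where
  prob i ha hb sA x := (αf sA).prob i ha hb () x
  nonneg i ha hb sA x := (αf sA).nonneg i ha hb () x
  sum_one i ha hb sA := (αf sA).sum_one i ha hb ()
  causal i ha ha' hb hb' sA h1 h2 := (αf sA).causal i ha ha' hb hb' () h1 h2

/-- Bob ignoring his side information, playing the full-information strategy of state `s`. -/
def constB (SB : Type*) {n : ℕ} (β' : BehavStrategy A B S B n) (s : S) :
    BehavStrategy A B SB B n where
  prob i ha hb _ x := β'.prob i ha hb s x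
  nonneg i ha hb _ x := β'.nonneg i ha hb s x
  sum_one i ha hb _ := β'.sum_one i ha hb s
  causal i ha ha' hb hb' _ h1 h2 := β'.causal i ha ha' hb hb' s h1 h2

/-- Pulling back Bob's strategy along the side-information map. -/
def pullbackB {n : ℕ} (β : BehavStrategy A B SB B n) (TB : S → SB) :
    BehavStrategy A B S B n where
  prob i ha hb s x := β.prob i ha hb (TB s) x
  nonneg i ha hb s x := β.nonneg i ha hb (TB s) x
  sum_one i ha hb s := β.sum_one i ha hb (TB s)
  causal i ha ha' hb hb' s h1 h2 := β.causal i ha ha' hb hb' (TB s) h1 h2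

/-- The uniform strategy. -/
noncomputable def unifStrat (A B SI Act : Type*) [Fintype A] [Fintype B] [Fintype Act]
    [Nonempty Act] (n : ℕ) : BehavStrategy A B SI Act n where
  prob _ _ _ _ _ := (Fintype.card Act : ℝ)⁻¹
  nonneg _ _ _ _ _ := by positivity
  sum_one i ha hb si := by
    rw [Finset.sum_const, Finset.card_univ, nsmul_eq_mul, mul_inv_cancel₀]
    exact_mod_cast Fintype.card_ne_zero
  causal _ _ _ _ _ _ _ _ := rfl

lemma avgPay_le (g : S → A → B → ℝ) (M : ℝ) (hM : ∀ s a b, g s a b ≤ M) {n : ℕ}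
    (hn : 0 < n) (s : S) (a : Fin n → A) (b : Fin n → B) : avgPay g s a b ≤ M := by
  unfold avgPay
  have h1 : ∑ i : Fin n, g s (a i) (b i) ≤ (n : ℝ) * M := by
    calc ∑ i : Fin n, g s (a i) (b i) ≤ ∑ _i : Fin n, M :=
          Finset.sum_le_sum fun i _ => hM s (a i) (b i)
      _ = (n : ℝ) * M := by rw [Finset.sum_const, Finset.card_univ, Fintype.card_fin,
            nsmul_eq_mul]
  have hn' : (0:ℝ) < (n:ℝ) := by exact_mod_cast hn
  calc (n : ℝ)⁻¹ * ∑ i : Fin n, g s (a i) (b i) ≤ (n : ℝ)⁻¹ * ((n:ℝ) * M) :=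
        mul_le_mul_of_nonneg_left h1 (by positivity)
    _ = M := by field_simp

lemma le_avgPay (g : S → A → B → ℝ) (m : ℝ) (hm : ∀ s a b, m ≤ g s a b) {n : ℕ}
    (hn : 0 < n) (s : S) (a : Fin n → A) (b : Fin n → B) : m ≤ avgPay g s a b := by
  unfold avgPay
  have h1 : (n : ℝ) * m ≤ ∑ i : Fin n, g s (a i) (b i) := by
    calc (n : ℝ) * m = ∑ _i : Fin n, m := by
          rw [Finset.sum_const, Finset.card_univ, Fintype.card_fin, nsmul_eq_mul]
      _ ≤ _ := Finset.sum_le_sum fun i _ => hm s (a i) (b i)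
  have hn' : (0:ℝ) < (n:ℝ) := by exact_mod_cast hn
  calc m = (n : ℝ)⁻¹ * ((n:ℝ) * m) := by field_simp
    _ ≤ (n : ℝ)⁻¹ * ∑ i : Fin n, g s (a i) (b i) :=
        mul_le_mul_of_nonneg_left h1 (by positivity)

lemma condP_eq_one [Nonempty A] [Nonempty B] (g : S → A → B → ℝ) {v : ℝ} {n : ℕ} (hn : 0 < n)
    (α : BehavStrategy A B SA A n) (β : BehavStrategy A B SB B n) (sa : SA) (sb : SB) (s : S)
    (M : ℝ) (hM : ∀ s a b, g s a b ≤ M) (hv : M < v) :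
    condP g v (fun i a b x => α.prob i a b sa x) (fun i a b x => β.prob i a b sb x) s = 1 := by
  unfold condP
  have hind : ∀ (a : Fin n → A) (b : Fin n → B), avgPay g s a b < v := fun a b =>
    lt_of_le_of_lt (avgPay_le g M hM hn s a b) hv
  calc ∑ a : Fin n → A, ∑ b : Fin n → B, (if avgPay g s a b < v then
        ∏ i, α.prob i a b sa (a i) * β.prob i a b sb (b i) else 0)
      = ∑ a : Fin n → A, ∑ b : Fin n → B,
          ∏ i, α.prob i a b sa (a i) * β.prob i a b sb (b i) := by
        refine Finset.sum_congr rfl fun a _ => Finset.sum_congr rfl fun b _ => ?_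
        rw [if_pos (hind a b)]
    _ = 1 := by
        refine sum_sum_prod_eq_one n
          (fun i a b => α.prob i a b sa (a i) * β.prob i a b sb (b i)) ?_ ?_
        · intro i a a' b b' ha hb
          have h1 : α.prob i a b sa = α.prob i a' b' sa :=
            α.causal i a a' b b' sa (fun j hj => ha j (le_of_lt hj))
              (fun j hj => hb j (le_of_lt hj))
          have h2 : β.prob i a b sb = β.prob i a' b' sb :=
            β.causal i a a' b b' sb (fun j hj => ha j (le_of_lt hj))
              (fun j hj => hb j (le_of_lt hj))
          rw [h1, h2, ha i le_rfl, hb i le_rfl]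
        · intro i a b
          have h1 : ∀ (x : A) (y : B),
              α.prob i (Function.update a i x) (Function.update b i y) sa = α.prob i a b sa := by
            intro x y
            apply α.causal
            · intro m hm
              have hne : m ≠ i := by intro h; rw [h] at hm; exact lt_irrefl _ hm
              exact Function.update_of_ne hne x a
            · intro m hm
              have hne : m ≠ i := by intro h; rw [h] at hm; exact lt_irrefl _ hm
              exact Function.update_of_ne hne y b
          have h2 : ∀ (x : A) (y : B),
              β.prob i (Function.update a i x) (Function.update b i y) sb = β.prob i a b sb := by
            intro x y
            apply β.causal
            · intro m hm
              have hne : m ≠ i := by intro h; rw [h] at hm; exact lt_irrefl _ hm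
              exact Function.update_of_ne hne x a
            · intro m hm
              have hne : m ≠ i := by intro h; rw [h] at hm; exact lt_irrefl _ hm
              exact Function.update_of_ne hne y b
          calc ∑ x : A, ∑ y : B,
                α.prob i (Function.update a i x) (Function.update b i y) sa
                  ((Function.update a i x) i) *
                β.prob i (Function.update a i x) (Function.update b i y) sb
                  ((Function.update b i y) i)
              = ∑ x : A, ∑ y : B, α.prob i a b sa x * β.prob i a b sb y := by
                refine Finset.sum_congr rfl fun x _ => Finset.sum_congr rfl fun y _ => ?_
                rw [h1 x y, h2 x y, Function.update_self, Function.update_self]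
            _ = (∑ x : A, α.prob i a b sa x) * (∑ y : B, β.prob i a b sb y) := by
                rw [Finset.sum_mul_sum]
            _ = 1 := by rw [α.sum_one, β.sum_one, mul_one]

lemma inducedP_nonneg (g : S → A → B → ℝ) (p : S → ℝ) (hp0 : ∀ s, 0 ≤ p s)
    (TA : S → SA) (TB : S → SB) {n : ℕ} (α : BehavStrategy A B SA A n)
    (β : BehavStrategy A B SB B n) (s : S) (a : Fin n → A) (b : Fin n → B) :
    0 ≤ inducedP p TA TB α β s a b :=
  mul_nonneg (hp0 s) (Finset.prod_nonneg fun i _ =>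
    mul_nonneg (α.nonneg _ _ _ _ _) (β.nonneg _ _ _ _ _))

lemma probBelow_mono (g : S → A → B → ℝ) (p : S → ℝ) (hp0 : ∀ s, 0 ≤ p s)
    (TA : S → SA) (TB : S → SB) {n : ℕ} (α : BehavStrategy A B SA A n)
    (β : BehavStrategy A B SB B n) {v v' : ℝ} (hv : v' ≤ v) :
    probBelow g p TA TB α β v' ≤ probBelow g p TA TB α β v := by
  unfold probBelow
  refine Finset.sum_le_sum fun s _ => Finset.sum_le_sum fun a _ =>
    Finset.sum_le_sum fun b _ => ?_
  by_cases h : avgPay g s a b < v'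
  · rw [if_pos h, if_pos (lt_of_lt_of_le h hv)]
  · rw [if_neg h]
    split
    · exact inducedP_nonneg g p hp0 TA TB α β s a b
    · exact le_refl 0

lemma strong_imp_weak (g : S → A → B → ℝ) (p : S → ℝ) (TA : S → SA) (TB : S → SB) (v : ℝ)
    (h : StronglyGuarantees g p TA TB v) : WeaklyGuarantees g p TA TB v := by
  intro ε hε
  obtain ⟨N, hN⟩ := h ε hε
  exact ⟨N, fun n hn β => (hN n hn).imp fun α hα => hα β⟩

lemma weakly_anti (g : S → A → B → ℝ) (p : S → ℝ) (hp0 : ∀ s, 0 ≤ p s)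
    (TA : S → SA) (TB : S → SB) {v v' : ℝ} (hv : v' ≤ v)
    (h : WeaklyGuarantees g p TA TB v) : WeaklyGuarantees g p TA TB v' := by
  intro ε hε
  obtain ⟨N, hN⟩ := h ε hε
  exact ⟨N, fun n hn β => (hN n hn β).imp fun α hα =>
    lt_of_le_of_lt (probBelow_mono g p hp0 TA TB α β hv) hα⟩

lemma strongly_anti (g : S → A → B → ℝ) (p : S → ℝ) (hp0 : ∀ s, 0 ≤ p s)
    (TA : S → SA) (TB : S → SB) {v v' : ℝ} (hv : v' ≤ v)
    (h : StronglyGuarantees g p TA TB v) : StronglyGuarantees g p TA TB v' := by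
  intro ε hε
  obtain ⟨N, hN⟩ := h ε hε
  exact ⟨N, fun n hn => (hN n hn).imp fun α hα β =>
    lt_of_le_of_lt (probBelow_mono g p hp0 TA TB α β hv) (hα β)⟩

lemma strongly_bot [Nonempty A] (g : S → A → B → ℝ) (p : S → ℝ) (TA : S → SA) (TB : S → SB)
    (m : ℝ) (hm : ∀ s a b, m ≤ g s a b) : StronglyGuarantees g p TA TB (m - 1) := by
  intro ε hε
  refine ⟨0, fun n hn => ⟨unifStrat A B SA A n, fun β => ?_⟩⟩
  have : probBelow g p TA TB (unifStrat A B SA A n) β (m - 1) = 0 := by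
    unfold probBelow
    refine Finset.sum_eq_zero fun s _ => Finset.sum_eq_zero fun a _ =>
      Finset.sum_eq_zero fun b _ => ?_
    rw [if_neg]
    push_neg
    linarith [le_avgPay g m hm hn s a b]
  rw [this]; exact hε

lemma weakly_le_top [Nonempty A] [Nonempty B] (g : S → A → B → ℝ) (p : S → ℝ)
    (hp1 : ∑ s, p s = 1) (TA : S → SA) (TB : S → SB) (M : ℝ) (hM : ∀ s a b, g s a b ≤ M)
    {v : ℝ} (h : WeaklyGuarantees g p TA TB v) : v ≤ M + 1 := by
  by_contra hlt
  push_neg at hlt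
  obtain ⟨N, hN⟩ := h (1/2) (by norm_num)
  obtain ⟨α, hα⟩ := hN (N + 1) (Nat.lt_succ_self N) (unifStrat A B SB B (N + 1))
  have h1 : probBelow g p TA TB α (unifStrat A B SB B (N + 1)) v = 1 := by
    rw [probBelow_eq_sum]
    have : ∀ s : S, condP g v (fun i a b x => α.prob i a b (TA s) x)
        (fun i a b x => (unifStrat A B SB B (N+1)).prob i a b (TB s) x) s = 1 := fun s =>
      condP_eq_one g (Nat.succ_pos N) α _ (TA s) (TB s) s M hM (by linarith)
    calc ∑ s, p s * condP g v (fun i a b x => α.prob i a b (TA s) x)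
          (fun i a b x => (unifStrat A B SB B (N+1)).prob i a b (TB s) x) s
        = ∑ s, p s := by
          refine Finset.sum_congr rfl fun s _ => ?_
          rw [this s, mul_one]
      _ = 1 := hp1
  rw [h1] at hα
  norm_num at hα
end Transfer

section Bounds
set_option linter.unusedSectionVars false
set_option maxHeartbeats 1000000
open Finset
open scoped Classical

variable {S SA SB A B : Type*} [Fintype S] [Fintype SA] [Fintype SB] [Fintype A] [Fintype B]
  [Nonempty S] [Nonempty SA] [Nonempty SB] [Nonempty A] [Nonempty B]

lemma div_trick {X qs c ε' : ℝ} (hX : 0 ≤ X) (hc : 0 < c) (hcq : c ≤ qs) (h : qs * X < ε') :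
    X ≤ ε' / c := by
  rw [le_div_iff₀ hc]
  nlinarith

lemma comb_bound (g : S → A → B → ℝ) (p : S → ℝ) (hp0 : ∀ s, 0 ≤ p s) (hp1 : ∑ s, p s = 1)
    (TA : S → SA) (TB : S → SB) (q : SA → S → ℝ) (hq0 : ∀ sA s, 0 ≤ q sA s)
    (v c ε' : ℝ) (hc : 0 < c) (hcle : ∀ s, c ≤ q (TA s) s) {n : ℕ}
    (β : BehavStrategy A B SB B n) (αf : SA → BehavStrategy A B Unit A n)
    (hαf : ∀ sA, probBelow g (q sA) (fun _ => ()) (id : S → S) (αf sA) (pullbackB β TB) v < ε') :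
    probBelow g p TA TB (combineA αf) β v ≤ ε' / c := by
  rw [probBelow_eq_sum]
  have hterm : ∀ s : S, condP g v (fun i a b x => (combineA αf).prob i a b (TA s) x)
      (fun i a b x => β.prob i a b (TB s) x) s ≤ ε' / c := by
    intro s
    have hsm := hαf (TA s)
    rw [probBelow_eq_sum] at hsm
    have hnn : ∀ s' ∈ (univ : Finset S), 0 ≤ q (TA s) s' *
        condP g v (fun i a b x => (αf (TA s)).prob i a b ((fun _ : S => ()) s') x)
          (fun i a b x => (pullbackB β TB).prob i a b (id s') x) s' := by
      intro s' _
      exact mul_nonneg (hq0 _ _) (condP_nonneg _ _ _ _ _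
        (fun i a b x => (αf (TA s)).nonneg i a b () x)
        (fun i a b x => (pullbackB β TB).nonneg i a b s' x))
    have hle := Finset.single_le_sum hnn (Finset.mem_univ s)
    have hX : q (TA s) s * condP g v (fun i a b x => (combineA αf).prob i a b (TA s) x)
        (fun i a b x => β.prob i a b (TB s) x) s < ε' := lt_of_le_of_lt hle hsm
    refine div_trick ?_ hc (hcle s) hX
    exact condP_nonneg _ _ _ _ _
      (fun i a b x => (combineA αf).nonneg i a b (TA s) x)
      (fun i a b x => β.nonneg i a b (TB s) x)
  calc ∑ s, p s * condP g v (fun i a b x => (combineA αf).prob i a b (TA s) x)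
        (fun i a b x => β.prob i a b (TB s) x) s
      ≤ ∑ s, p s * (ε' / c) :=
        Finset.sum_le_sum fun s _ => mul_le_mul_of_nonneg_left (hterm s) (hp0 s)
    _ = ε' / c := by rw [← Finset.sum_mul, hp1, one_mul]

lemma split_bound (g : S → A → B → ℝ) (p : S → ℝ) (TA : S → SA) (TB : S → SB)
    (q : SA → S → ℝ) (sA : SA) (hq0 : ∀ sA s, 0 ≤ q sA s) (hq1 : ∑ s, q sA s = 1)
    (hqz : ∀ sA s, TA s ≠ sA → q sA s = 0)
    (v c ε' : ℝ) (hc : 0 < c) (hcle : ∀ s, c ≤ p s) {n : ℕ}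
    (α : BehavStrategy A B SA A n) (β' : BehavStrategy A B S B n)
    (hbig : ∀ s : S, probBelow g p TA TB α (constB SB β' s) v < ε') :
    probBelow g (q sA) (fun _ => ()) (id : S → S) (restrictA α sA) β' v ≤ ε' / c := by
  rw [probBelow_eq_sum]
  have hterm : ∀ s : S, q sA s * condP g v
      (fun i a b x => (restrictA α sA).prob i a b ((fun _ : S => ()) s) x)
      (fun i a b x => β'.prob i a b (id s) x) s ≤ q sA s * (ε' / c) := by
    intro s
    by_cases hTA : TA s = sA
    · subst hTA
      refine mul_le_mul_of_nonneg_left ?_ (hq0 _ s)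
      have hsb := hbig s
      rw [probBelow_eq_sum] at hsb
      have hnn : ∀ s' ∈ (univ : Finset S), 0 ≤ p s' *
          condP g v (fun i a b x => α.prob i a b (TA s') x)
            (fun i a b x => (constB SB β' s).prob i a b (TB s') x) s' := by
        intro s' _
        exact mul_nonneg (le_trans (le_of_lt hc) (hcle s')) (condP_nonneg _ _ _ _ _
          (fun i a b x => α.nonneg i a b (TA s') x)
          (fun i a b x => (constB SB β' s).nonneg i a b (TB s') x))
      have hle := Finset.single_le_sum hnn (Finset.mem_univ s)
      have hX : p s * condP g v
          (fun i a b x => (restrictA α (TA s)).prob i a b ((fun _ : S => ()) s) x)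
          (fun i a b x => β'.prob i a b (id s) x) s < ε' := lt_of_le_of_lt hle hsb
      refine div_trick ?_ hc (hcle s) hX
      exact condP_nonneg _ _ _ _ _
        (fun i a b x => (restrictA α (TA s)).nonneg i a b () x)
        (fun i a b x => β'.nonneg i a b s x)
    · rw [hqz sA s hTA, zero_mul, zero_mul]
  calc ∑ s, q sA s * condP g v
        (fun i a b x => (restrictA α sA).prob i a b ((fun _ : S => ()) s) x)
        (fun i a b x => β'.prob i a b (id s) x) s
      ≤ ∑ s, q sA s * (ε' / c) := Finset.sum_le_sum fun s _ => hterm s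
    _ = ε' / c := by rw [← Finset.sum_mul, hq1, one_mul]

lemma mix_bound (g : S → A → B → ℝ) (p : S → ℝ) (TA : S → SA) (TB : S → SB)
    (q : SA → S → ℝ) (sA : SA) (hq0 : ∀ sA s, 0 ≤ q sA s) (hq1 : ∑ s, q sA s = 1)
    (hqz : ∀ sA s, TA s ≠ sA → q sA s = 0)
    (v c ε' : ℝ) (hc : 0 < c) (hcle : ∀ s, c ≤ p s) {n : ℕ}
    (α : BehavStrategy A B SA A n) (β' : BehavStrategy A B S B n)
    (hbig : probBelow g p TA TB α (mixStrat SB β') v < ε') :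
    probBelow g (q sA) (fun _ => ()) (id : S → S) (restrictA α sA) β' v ≤
      (Fintype.card S : ℝ) * (ε' / c) := by
  have hcard : (0:ℝ) < (Fintype.card S : ℝ) := by exact_mod_cast Fintype.card_pos
  rw [probBelow_eq_sum]
  have hterm : ∀ s : S, q sA s * condP g v
      (fun i a b x => (restrictA α sA).prob i a b ((fun _ : S => ()) s) x)
      (fun i a b x => β'.prob i a b (id s) x) s ≤
        q sA s * ((Fintype.card S : ℝ) * (ε' / c)) := by
    intro s
    by_cases hTA : TA s = sA
    · subst hTA
      refine mul_le_mul_of_nonneg_left ?_ (hq0 _ s)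
      have h1 : condP g v
          (fun i a b x => (restrictA α (TA s)).prob i a b ((fun _ : S => ()) s) x)
          (fun i a b x => β'.prob i a b (id s) x) s ≤
          (Fintype.card S : ℝ) * condP g v (fun i a b x => α.prob i a b (TA s) x)
            (fun i a b x => (mixStrat SB β').prob i a b (TB s) x) s := by
        unfold condP
        rw [Finset.mul_sum]
        refine Finset.sum_le_sum fun a _ => ?_
        rw [Finset.mul_sum]
        refine Finset.sum_le_sum fun b _ => ?_
        by_cases hcond : avgPay g s a b < v
        · rw [if_pos hcond, if_pos hcond]
          show ∏ i, α.prob i a b (TA s) (a i) * β'.prob i a b s (b i) ≤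
            (Fintype.card S : ℝ) *
              ∏ i, α.prob i a b (TA s) (a i) * (mixStrat SB β').prob i a b (TB s) (b i)
          rw [Finset.prod_mul_distrib, Finset.prod_mul_distrib]
          have hmix := prod_mix_ge β' (TB s) s a b
          have hαnn : 0 ≤ ∏ i, α.prob i a b (TA s) (a i) :=
            Finset.prod_nonneg fun i _ => α.nonneg _ _ _ _ _
          have h2 : ∏ i, β'.prob i a b s (b i) ≤
              (Fintype.card S : ℝ) * ∏ i, (mixStrat SB β').prob i a b (TB s) (b i) := by
            have h3 := mul_le_mul_of_nonneg_left hmix (le_of_lt hcard)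
            rwa [← mul_assoc, mul_inv_cancel₀ (ne_of_gt hcard), one_mul] at h3
          calc (∏ i, α.prob i a b (TA s) (a i)) * ∏ i, β'.prob i a b s (b i)
              ≤ (∏ i, α.prob i a b (TA s) (a i)) *
                  ((Fintype.card S : ℝ) * ∏ i, (mixStrat SB β').prob i a b (TB s) (b i)) :=
                mul_le_mul_of_nonneg_left h2 hαnn
            _ = (Fintype.card S : ℝ) * ((∏ i, α.prob i a b (TA s) (a i)) *
                  ∏ i, (mixStrat SB β').prob i a b (TB s) (b i)) := by ring
        · rw [if_neg hcond, if_neg hcond, mul_zero]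
      have h2 : condP g v (fun i a b x => α.prob i a b (TA s) x)
          (fun i a b x => (mixStrat SB β').prob i a b (TB s) x) s ≤ ε' / c := by
        rw [probBelow_eq_sum] at hbig
        have hnn : ∀ s' ∈ (univ : Finset S), 0 ≤ p s' *
            condP g v (fun i a b x => α.prob i a b (TA s') x)
              (fun i a b x => (mixStrat SB β').prob i a b (TB s') x) s' := by
          intro s' _
          exact mul_nonneg (le_trans (le_of_lt hc) (hcle s')) (condP_nonneg _ _ _ _ _
            (fun i a b x => α.nonneg i a b (TA s') x)
            (fun i a b x => (mixStrat SB β').nonneg i a b (TB s') x))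
        have hle := Finset.single_le_sum hnn (Finset.mem_univ s)
        have hX := lt_of_le_of_lt hle hbig
        refine div_trick ?_ hc (hcle s) hX
        exact condP_nonneg _ _ _ _ _
          (fun i a b x => α.nonneg i a b (TA s) x)
          (fun i a b x => (mixStrat SB β').nonneg i a b (TB s) x)
      calc condP g v
            (fun i a b x => (restrictA α (TA s)).prob i a b ((fun _ : S => ()) s) x)
            (fun i a b x => β'.prob i a b (id s) x) s
          ≤ (Fintype.card S : ℝ) * condP g v (fun i a b x => α.prob i a b (TA s) x)
              (fun i a b x => (mixStrat SB β').prob i a b (TB s) x) s := h1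
        _ ≤ (Fintype.card S : ℝ) * (ε' / c) :=
            mul_le_mul_of_nonneg_left h2 (le_of_lt hcard)
    · rw [hqz sA s hTA, zero_mul, zero_mul]
  calc ∑ s, q sA s * condP g v
        (fun i a b x => (restrictA α sA).prob i a b ((fun _ : S => ()) s) x)
        (fun i a b x => β'.prob i a b (id s) x) s
      ≤ ∑ s, q sA s * ((Fintype.card S : ℝ) * (ε' / c)) :=
        Finset.sum_le_sum fun s _ => hterm s
    _ = (Fintype.card S : ℝ) * (ε' / c) := by rw [← Finset.sum_mul, hq1, one_mul]
end Bounds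

section Final
set_option linter.unusedSectionVars false
set_option maxHeartbeats 1000000
open Finset
open scoped Classical

variable {S SA SB A B : Type*} [Fintype S] [Fintype SA] [Fintype SB] [Fintype A] [Fintype B]
  [Nonempty S] [Nonempty SA] [Nonempty SB] [Nonempty A] [Nonempty B]

lemma weak_backward (g : S → A → B → ℝ) (p : S → ℝ) (hp0 : ∀ s, 0 ≤ p s)
    (hp1 : ∑ s, p s = 1) (TA : S → SA) (TB : S → SB) (q : SA → S → ℝ)
    (hq0 : ∀ sA s, 0 ≤ q sA s) (hqsupp : ∀ sA s, 0 < q sA s ↔ TA s = sA) (v : ℝ)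
    (h : ∀ sA, WeaklyGuarantees g (q sA) (fun _ => ()) (id : S → S) v) :
    WeaklyGuarantees g p TA TB v := by
  intro ε hε
  obtain ⟨s₀, -, hs₀⟩ := Finset.exists_min_image (univ : Finset S)
    (fun s => q (TA s) s) univ_nonempty
  have hc : 0 < q (TA s₀) s₀ := (hqsupp (TA s₀) s₀).2 rfl
  have hε' : 0 < ε * q (TA s₀) s₀ / 2 := by positivity
  choose Nf hNf using fun sA => h sA (ε * q (TA s₀) s₀ / 2) hε'
  refine ⟨Finset.univ.sup Nf, fun n hn β => ?_⟩
  have hn' : ∀ sA, Nf sA < n := fun sA =>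
    lt_of_le_of_lt (Finset.le_sup (Finset.mem_univ sA)) hn
  choose αf hαf using fun sA => hNf sA n (hn' sA) (pullbackB β TB)
  refine ⟨combineA αf, ?_⟩
  have hb := comb_bound g p hp0 hp1 TA TB q hq0 v (q (TA s₀) s₀) (ε * q (TA s₀) s₀ / 2)
    hc (fun s => hs₀ s (Finset.mem_univ s)) β αf hαf
  have heq : ε * q (TA s₀) s₀ / 2 / q (TA s₀) s₀ = ε / 2 := by
    field_simp
  exact lt_of_le_of_lt hb (by rw [heq]; linarith)

lemma strong_backward (g : S → A → B → ℝ) (p : S → ℝ) (hp0 : ∀ s, 0 ≤ p s)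
    (hp1 : ∑ s, p s = 1) (TA : S → SA) (TB : S → SB) (q : SA → S → ℝ)
    (hq0 : ∀ sA s, 0 ≤ q sA s) (hqsupp : ∀ sA s, 0 < q sA s ↔ TA s = sA) (v : ℝ)
    (h : ∀ sA, StronglyGuarantees g (q sA) (fun _ => ()) (id : S → S) v) :
    StronglyGuarantees g p TA TB v := by
  intro ε hε
  obtain ⟨s₀, -, hs₀⟩ := Finset.exists_min_image (univ : Finset S)
    (fun s => q (TA s) s) univ_nonempty
  have hc : 0 < q (TA s₀) s₀ := (hqsupp (TA s₀) s₀).2 rfl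
  have hε' : 0 < ε * q (TA s₀) s₀ / 2 := by positivity
  choose Nf hNf using fun sA => h sA (ε * q (TA s₀) s₀ / 2) hε'
  refine ⟨Finset.univ.sup Nf, fun n hn => ?_⟩
  have hn' : ∀ sA, Nf sA < n := fun sA =>
    lt_of_le_of_lt (Finset.le_sup (Finset.mem_univ sA)) hn
  choose αf hαf using fun sA => hNf sA n (hn' sA)
  refine ⟨combineA αf, fun β => ?_⟩
  have hb := comb_bound g p hp0 hp1 TA TB q hq0 v (q (TA s₀) s₀) (ε * q (TA s₀) s₀ / 2)
    hc (fun s => hs₀ s (Finset.mem_univ s)) β αf (fun sA => hαf sA (pullbackB β TB))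
  have heq : ε * q (TA s₀) s₀ / 2 / q (TA s₀) s₀ = ε / 2 := by
    field_simp
  exact lt_of_le_of_lt hb (by rw [heq]; linarith)

lemma strong_forward (g : S → A → B → ℝ) (p : S → ℝ) (hp : ∀ s, 0 < p s)
    (TA : S → SA) (TB : S → SB) (q : SA → S → ℝ) (hq0 : ∀ sA s, 0 ≤ q sA s)
    (hq1 : ∀ sA, ∑ s, q sA s = 1) (hqz : ∀ sA s, TA s ≠ sA → q sA s = 0) (v : ℝ)
    (h : StronglyGuarantees g p TA TB v) (sA : SA) :
    StronglyGuarantees g (q sA) (fun _ => ()) (id : S → S) v := by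
  intro ε hε
  obtain ⟨s₀, -, hs₀⟩ := Finset.exists_min_image (univ : Finset S) p univ_nonempty
  have hc : 0 < p s₀ := hp s₀
  have hε' : 0 < ε * p s₀ / 2 := by positivity
  obtain ⟨N, hN⟩ := h (ε * p s₀ / 2) hε'
  refine ⟨N, fun n hn => ?_⟩
  obtain ⟨α, hα⟩ := hN n hn
  refine ⟨restrictA α sA, fun β' => ?_⟩
  have hb := split_bound g p TA TB q sA hq0 (hq1 sA) hqz v (p s₀) (ε * p s₀ / 2) hc
    (fun s => hs₀ s (Finset.mem_univ s)) α β' (fun s => hα (constB SB β' s))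
  have heq : ε * p s₀ / 2 / p s₀ = ε / 2 := by
    field_simp
  exact lt_of_le_of_lt hb (by rw [heq]; linarith)

lemma weak_forward (g : S → A → B → ℝ) (p : S → ℝ) (hp : ∀ s, 0 < p s)
    (TA : S → SA) (TB : S → SB) (q : SA → S → ℝ) (hq0 : ∀ sA s, 0 ≤ q sA s)
    (hq1 : ∀ sA, ∑ s, q sA s = 1) (hqz : ∀ sA s, TA s ≠ sA → q sA s = 0) (v : ℝ)
    (h : WeaklyGuarantees g p TA TB v) (sA : SA) :
    WeaklyGuarantees g (q sA) (fun _ => ()) (id : S → S) v := by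
  intro ε hε
  obtain ⟨s₀, -, hs₀⟩ := Finset.exists_min_image (univ : Finset S) p univ_nonempty
  have hc : 0 < p s₀ := hp s₀
  have hcard : (0:ℝ) < (Fintype.card S : ℝ) := by exact_mod_cast Fintype.card_pos
  have hε' : 0 < ε * p s₀ / (2 * (Fintype.card S : ℝ)) := by positivity
  obtain ⟨N, hN⟩ := h (ε * p s₀ / (2 * (Fintype.card S : ℝ))) hε'
  refine ⟨N, fun n hn β' => ?_⟩
  obtain ⟨α, hα⟩ := hN n hn (mixStrat SB β')
  refine ⟨restrictA α sA, ?_⟩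
  have hb := mix_bound g p TA TB q sA hq0 (hq1 sA) hqz v (p s₀)
    (ε * p s₀ / (2 * (Fintype.card S : ℝ))) hc (fun s => hs₀ s (Finset.mem_univ s)) α β' hα
  have heq : (Fintype.card S : ℝ) * (ε * p s₀ / (2 * (Fintype.card S : ℝ)) / p s₀) = ε / 2 := by
    field_simp
  exact lt_of_le_of_lt hb (by rw [heq]; linarith)

lemma sSup_eq_iInf_aux {ι : Type*} [Fintype ι] [Nonempty ι] (W : Set ℝ) (Ws : ι → Set ℝ)
    (hiff : ∀ v, v ∈ W ↔ ∀ i, v ∈ Ws i)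
    (v₀ : ℝ) (hv₀ : ∀ i, v₀ ∈ Ws i)
    (M' : ℝ) (hbW : ∀ v ∈ W, v ≤ M') (hbWs : ∀ i, ∀ v ∈ Ws i, v ≤ M')
    (hdc : ∀ i, ∀ v ∈ Ws i, ∀ v' ≤ v, v' ∈ Ws i) :
    sSup W = ⨅ i, sSup (Ws i) := by
  have hWne : W.Nonempty := ⟨v₀, (hiff v₀).2 hv₀⟩
  have hWb : BddAbove W := ⟨M', fun v hv => hbW v hv⟩
  have hWsb : ∀ i, BddAbove (Ws i) := fun i => ⟨M', fun v hv => hbWs i v hv⟩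
  have hWsne : ∀ i, (Ws i).Nonempty := fun i => ⟨v₀, hv₀ i⟩
  apply le_antisymm
  · exact le_ciInf fun i => csSup_le_csSup (hWsb i) hWne fun v hv => (hiff v).1 hv i
  · refine le_of_forall_lt fun c hc => ?_
    obtain ⟨c', hcc', hc'⟩ := exists_between hc
    have hcW : c' ∈ W := by
      refine (hiff c').2 fun i => ?_
      have h1 : c' < sSup (Ws i) :=
        lt_of_lt_of_le hc' (ciInf_le (Set.Finite.bddBelow (Set.finite_range _)) i)
      obtain ⟨w, hw, hcw⟩ := exists_lt_of_lt_csSup (hWsne i) h1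
      exact hdc i w hw c' (le_of_lt hcw)
    exact lt_of_lt_of_le hcc' (le_csSup hWb hcW)
end Final

/-- Reduction to the case where Alice has no side information and Bob knows
the state exactly: `v_sup^{w/s}(p, 𝒯_A, 𝒯_B) = min_{s_A} v_sup^{w/s}(q_{s_A}, ∅, 𝟙)`, where
`q_{s_A}` is any prior whose support is exactly `𝒯_A⁻¹(s_A)`. -/
theorem stmt3 {S SA SB A B : Type*} [Fintype S] [Fintype SA] [Fintype SB] [Fintype A] [Fintype B]
    [Nonempty S] [Nonempty SA] [Nonempty SB] [Nonempty A] [Nonempty B]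
    (g : S → A → B → ℝ) (p : S → ℝ) (hp : ∀ s, 0 < p s) (hp1 : ∑ s, p s = 1)
    (TA : S → SA) (TB : S → SB) (hTA : Function.Surjective TA)
    (q : SA → S → ℝ)
    (hq0 : ∀ sA s, 0 ≤ q sA s) (hq1 : ∀ sA, ∑ s, q sA s = 1)
    (hqsupp : ∀ sA s, 0 < q sA s ↔ TA s = sA) :
    (vsupW g p TA TB = ⨅ sA : SA, vsupW g (q sA) (fun _ => ()) (id : S → S)) ∧
    (vsupS g p TA TB = ⨅ sA : SA, vsupS g (q sA) (fun _ => ()) (id : S → S)) := by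
  have hqz : ∀ sA s, TA s ≠ sA → q sA s = 0 := fun sA s h =>
    le_antisymm (not_lt.mp fun hpos => h ((hqsupp sA s).1 hpos)) (hq0 sA s)
  have hp0 : ∀ s, 0 ≤ p s := fun s => le_of_lt (hp s)
  obtain ⟨xm, -, hxm⟩ := Finset.exists_max_image (Finset.univ : Finset (S × A × B))
    (fun y => |g y.1 y.2.1 y.2.2|) Finset.univ_nonempty
  set M := |g xm.1 xm.2.1 xm.2.2| with hMdef
  have hMub : ∀ s a b, g s a b ≤ M := fun s a b =>
    le_trans (le_abs_self _) (hxm (s, a, b) (Finset.mem_univ _))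
  have hMlb : ∀ s a b, -M ≤ g s a b := fun s a b =>
    (abs_le.mp (hxm (s, a, b) (Finset.mem_univ _))).1
  constructor
  · exact sSup_eq_iInf_aux {v | WeaklyGuarantees g p TA TB v}
      (fun sA => {v | WeaklyGuarantees g (q sA) (fun _ => ()) (id : S → S) v})
      (fun v => ⟨fun hv sA => weak_forward g p hp TA TB q hq0 hq1 hqz v hv sA,
        fun hv => weak_backward g p hp0 hp1 TA TB q hq0 hqsupp v hv⟩)
      (-M - 1)
      (fun sA => strong_imp_weak _ _ _ _ _
        (strongly_bot g (q sA) (fun _ => ()) (id : S → S) (-M) hMlb))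
      (M + 1)
      (fun v hv => weakly_le_top g p hp1 TA TB M hMub hv)
      (fun sA v hv => weakly_le_top g (q sA) (hq1 sA) (fun _ => ()) (id : S → S) M hMub hv)
      (fun sA v hv v' hv' =>
        weakly_anti g (q sA) (hq0 sA) (fun _ => ()) (id : S → S) hv' hv)
  · exact sSup_eq_iInf_aux {v | StronglyGuarantees g p TA TB v}
      (fun sA => {v | StronglyGuarantees g (q sA) (fun _ => ()) (id : S → S) v})
      (fun v => ⟨fun hv sA => strong_forward g p hp TA TB q hq0 hq1 hqz v hv sA,
        fun hv => strong_backward g p hp0 hp1 TA TB q hq0 hqsupp v hv⟩)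
      (-M - 1)
      (fun sA => strongly_bot g (q sA) (fun _ => ()) (id : S → S) (-M) hMlb)
      (M + 1)
      (fun v hv => weakly_le_top g p hp1 TA TB M hMub (strong_imp_weak _ _ _ _ _ hv))
      (fun sA v hv => weakly_le_top g (q sA) (hq1 sA) (fun _ => ()) (id : S → S) M hMub
        (strong_imp_weak _ _ _ _ _ hv))
      (fun sA v hv v' hv' =>
        strongly_anti g (q sA) (hq0 sA) (fun _ => ()) (id : S → S) hv' hv)
end
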